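/- Let p ≥ 3 be a prime, 1 ≤ r < p, and let G_{E^{(p)}} = ⟨a, b_1,…,b_r⟩ be the multi-edge spinal group defined by an r-tuple E^{(p)} of linearly independent vectors in (Z/pZ)^{p−1}. Then G_{E^{(p)}} is a contracting group with nucleus N = ⟨a⟩ ∪ ⟨b_1,…,b_r⟩, and |N| = p^r + p − 1. -/

import Mathlib

/-- An automorphism of the rooted `p`-ary tree, encoded by its portrait:
at every vertex (a finite word over `Fin p`) it records the permutation of the
`p` subtrees hanging at that vertex. -/
@[ext]
structure TreeAut (p : ℕ) where
  perm : List (Fin p) → Equiv.Perm (Fin p)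

namespace TreeAut

variable {p : ℕ}

/-- The section of a tree automorphism at a first-level vertex `x`. -/
def sect (g : TreeAut p) (x : Fin p) : TreeAut p := ⟨fun v => g.perm (x :: v)⟩

/-- The section of a tree automorphism at an arbitrary vertex. -/
def sectV (g : TreeAut p) : List (Fin p) → TreeAut p
  | [] => g
  | x :: v => (g.sect x).sectV v

/-- The action of a tree automorphism on vertices (finite words over `Fin p`). -/
def act (g : TreeAut p) : List (Fin p) → List (Fin p)
  | [] => []
  | x :: v => g.perm [] x :: (g.sect x).act v

/-- The inverse of the action of a tree automorphism on vertices. -/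
def actInv (g : TreeAut p) : List (Fin p) → List (Fin p)
  | [] => []
  | x :: v => (g.perm []).symm x :: (g.sect ((g.perm []).symm x)).actInv v

instance : One (TreeAut p) := ⟨⟨fun _ => 1⟩⟩

/-- Composition convention as in the paper: `g * h` acts by `g` first, then `h`. -/
instance : Mul (TreeAut p) := ⟨fun g h => ⟨fun v => (g.perm v).trans (h.perm (g.act v))⟩⟩

instance : Inv (TreeAut p) := ⟨fun g => ⟨fun v => (g.perm (g.actInv v)).symm⟩⟩

theorem perm_one (v : List (Fin p)) : (1 : TreeAut p).perm v = 1 := rfl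

theorem perm_mul (g h : TreeAut p) (v : List (Fin p)) :
    (g * h).perm v = (g.perm v).trans (h.perm (g.act v)) := rfl

theorem perm_inv (g : TreeAut p) (v : List (Fin p)) :
    (g⁻¹).perm v = (g.perm (g.actInv v)).symm := rfl

theorem sect_one (x : Fin p) : (1 : TreeAut p).sect x = 1 := rfl

theorem sect_mul (g h : TreeAut p) (x : Fin p) :
    (g * h).sect x = g.sect x * h.sect (g.perm [] x) := rfl

theorem sect_inv (g : TreeAut p) (x : Fin p) :
    (g⁻¹).sect x = (g.sect ((g.perm []).symm x))⁻¹ := rfl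

theorem act_one : ∀ v : List (Fin p), (1 : TreeAut p).act v = v
  | [] => rfl
  | x :: v => by
    show (1 : Equiv.Perm (Fin p)) x :: ((1 : TreeAut p).sect x).act v = x :: v
    rw [sect_one, act_one v]
    rfl

theorem act_mul : ∀ (v : List (Fin p)) (g h : TreeAut p), (g * h).act v = h.act (g.act v)
  | [], _, _ => rfl
  | x :: v, g, h => by
    show (g * h).perm [] x :: ((g * h).sect x).act v = _
    rw [sect_mul, act_mul v]
    rfl

theorem act_inv : ∀ (v : List (Fin p)) (g : TreeAut p), (g⁻¹).act v = g.actInv v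
  | [], _ => rfl
  | x :: v, g => by
    show (g⁻¹).perm [] x :: ((g⁻¹).sect x).act v = _
    rw [sect_inv, act_inv v]
    rfl

instance : Group (TreeAut p) where
  mul_assoc g h k := by
    ext v y
    simp [perm_mul, act_mul, Equiv.trans_apply]
  one_mul g := by
    ext v y
    simp [perm_mul, perm_one, act_one]
  mul_one g := by
    ext v y
    simp [perm_mul, perm_one]
  inv_mul_cancel g := by
    ext v y
    simp [perm_mul, perm_inv, perm_one, act_inv]

end TreeAut

/-- The rooted automorphism `a = (1,…,1)ε`, where `ε = (0 1 … p-1)` is the cyclic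
rotation `x ↦ x + 1` of `Fin p`. -/
def rot (p : ℕ) [NeZero p] : TreeAut p :=
  ⟨fun v => if v = [] then Equiv.addRight (1 : Fin p) else 1⟩

/-- The components of a defining vector `v ∈ (ℤ/pℤ)^{p-1}`, read `p`-periodically:
for `1 ≤ n ≤ p-1`, `vcomp v n` is the `n`-th component of `v` (and `vcomp v n = 0`
when `n ≡ 0 mod p`). -/
def vcomp {p : ℕ} [NeZero p] (v : Fin (p - 1) → ZMod p) (n : ℕ) : ZMod p :=
  if h : n % p = 0 then 0
  else v ⟨n % p - 1, by
    have h2 : n % p < p := Nat.mod_lt _ (Nat.pos_of_ne_zero (NeZero.ne p))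
    omega⟩

/-- `N` is a quasinucleus with constant `k` for the self-similar group generated by the
symmetric set `S`: all sections at level `k` of products of two elements of `S ∪ N` lie in `N`. -/
def IsQuasiNucleusWith (p : ℕ) (S N : Set (TreeAut p)) (k : ℕ) : Prop :=
  ∀ n₁ ∈ S ∪ N, ∀ n₂ ∈ S ∪ N, ∀ v : List (Fin p), v.length = k → (n₁ * n₂).sectV v ∈ N

/-- `N` is the nucleus of the group `G` with symmetric generating set `S`:
`N` is the inclusion-minimal finite subset of `G` that is a quasinucleus for some
level constant `k ≥ 1`. -/
def IsNucleusOf (p : ℕ) (S : Set (TreeAut p)) (G : Subgroup (TreeAut p)) (N : Set (TreeAut p)) : Prop :=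
  (N ⊆ (G : Set (TreeAut p)) ∧ N.Finite ∧ ∃ k, 1 ≤ k ∧ IsQuasiNucleusWith p S N k) ∧
  ∀ N' : Set (TreeAut p), N' ⊆ (G : Set (TreeAut p)) → N'.Finite →
    (∃ k, 1 ≤ k ∧ IsQuasiNucleusWith p S N' k) → N ⊆ N'
open Fin.NatCast in
/-- The defining wreath recursions of the generators of a multi-edge spinal group
defined by an `r`-tuple `E^(p)` of linearly independent vectors of `(ℤ/pℤ)^{p-1}`:
each `b i` fixes all first-level vertices, has section `a^{e_{i,n}}` at the vertex
`n - 1` for `1 ≤ n ≤ p - 1` (Lean's `n : Fin (p-1)` is the paper's `n = n.val + 1`)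
and section `b i` at the vertex `p - 1`. -/
def IsSpinalDatum (p : ℕ) [NeZero p] {r : ℕ}
    (e : Fin r → Fin (p - 1) → ZMod p) (b : Fin r → TreeAut p) : Prop :=
  LinearIndependent (ZMod p) e ∧
  ∀ i : Fin r,
    (∀ x : Fin p, (b i).act [x] = [x]) ∧
    (b i).sect (((p - 1 : ℕ) : Fin p)) = b i ∧
    ∀ n : Fin (p - 1), (b i).sect ((n.val : ℕ) : Fin p) = rot p ^ (e i n).val

/-- The multi-edge spinal group `G_{E^(p)} = ⟨a, b_1, …, b_r⟩`. -/
def spinalGroup (p : ℕ) [NeZero p] {r : ℕ} (b : Fin r → TreeAut p) :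
    Subgroup (TreeAut p) :=
  Subgroup.closure (insert (rot p) (Set.range b))

theorem rot_mem_spinal (p : ℕ) [NeZero p] {r : ℕ} (b : Fin r → TreeAut p) :
    rot p ∈ spinalGroup p b :=
  Subgroup.subset_closure (Set.mem_insert _ _)

theorem b_mem_spinal (p : ℕ) [NeZero p] {r : ℕ} (b : Fin r → TreeAut p) (i : Fin r) :
    b i ∈ spinalGroup p b :=
  Subgroup.subset_closure (Set.mem_insert_of_mem _ ⟨i, rfl⟩)
section SpinalAux

open TreeAut
open Fin.NatCast

variable {p : ℕ} [NeZero p]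

lemma TreeAut.ext' {p : ℕ} {g h : TreeAut p} (H : ∀ v, g.perm v = h.perm v) : g = h :=
  TreeAut.ext (funext H)

/-- `v = (p-1)^m ++ [x]` with `x ≠ p-1` iff `tailIdx v = some ⟨x, _⟩`. -/
def tailIdx {p : ℕ} : List (Fin p) → Option (Fin (p - 1))
  | [] => none
  | [x] => if h : x.val = p - 1 then none else some ⟨x.val, by have := x.isLt; omega⟩
  | x :: y :: v => if x.val = p - 1 then tailIdx (y :: v) else none

lemma lastP_val : (((p - 1 : ℕ)) : Fin p).val = p - 1 := by
  rw [Fin.val_natCast]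
  exact Nat.mod_eq_of_lt (by have := NeZero.pos p; omega)

lemma eq_lastP {x : Fin p} (hx : x.val = p - 1) : x = ((p - 1 : ℕ) : Fin p) :=
  Fin.ext (hx.trans lastP_val.symm)

lemma tailIdx_cons_last (v : List (Fin p)) :
    tailIdx ((((p - 1 : ℕ)) : Fin p) :: v) = tailIdx v := by
  cases v with
  | nil => simp [tailIdx, lastP_val]
  | cons y w => simp [tailIdx, lastP_val]

lemma tailIdx_singleton_ne {x : Fin p} (hx : x.val ≠ p - 1) :
    tailIdx [x] = some ⟨x.val, by have := x.isLt; omega⟩ := by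
  simp [tailIdx, hx]

lemma tailIdx_cons_cons_ne {x y : Fin p} (hx : x.val ≠ p - 1) (w : List (Fin p)) :
    tailIdx (x :: y :: w) = none := by
  simp [tailIdx, hx]

/- rot lemmas -/

lemma rot_perm_nil : (rot p).perm [] = Equiv.addRight (1 : Fin p) := by
  simp [rot]

lemma rot_perm_cons (x : Fin p) (v : List (Fin p)) : (rot p).perm (x :: v) = 1 := by
  simp [rot]

lemma rot_pow_perm (m : ℕ) : ∀ v : List (Fin p),
    (rot p ^ m).perm v = if v = [] then Equiv.addRight ((m : Fin p)) else 1 := by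
  induction m with
  | zero => intro v; simp [perm_one]
  | succ m ih =>
    intro v
    rw [pow_succ, perm_mul, ih]
    cases v with
    | nil =>
      have hact : (rot p ^ m).act [] = [] := rfl
      rw [hact, rot_perm_nil]
      simp only [if_pos rfl]
      ext y
      simp [Equiv.coe_addRight, Equiv.trans_apply, add_assoc, Nat.cast_succ]
    | cons x w =>
      have hact : (rot p ^ m).act (x :: w) =
          (rot p ^ m).perm [] x :: ((rot p ^ m).sect x).act w := rfl
      rw [hact, rot_perm_cons]
      simp
      rfl

lemma rot_pow_sect (m : ℕ) (x : Fin p) : (rot p ^ m).sect x = 1 := by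
  apply TreeAut.ext'
  intro v
  show (rot p ^ m).perm (x :: v) = (1 : TreeAut p).perm v
  rw [rot_pow_perm, perm_one]
  simp

lemma rot_pow_act_cons (m : ℕ) (y : Fin p) (w : List (Fin p)) :
    (rot p ^ m).act (y :: w) = (y + (m : Fin p)) :: w := by
  show (rot p ^ m).perm [] y :: ((rot p ^ m).sect y).act w = _
  rw [rot_pow_perm, rot_pow_sect, act_one]
  simp [Equiv.coe_addRight]

lemma rot_pow_p : rot p ^ p = 1 := by
  ext v y
  rw [rot_pow_perm]
  simp [perm_one]

lemma rot_ne_one (hp : 2 ≤ p) : rot p ≠ 1 := by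
  intro h
  have h0 : (rot p).perm [] 0 = (1 : TreeAut p).perm [] 0 := by rw [h]
  rw [rot_perm_nil, perm_one] at h0
  simp only [Equiv.coe_addRight, Equiv.Perm.coe_one, id_eq, zero_add] at h0
  have h1 := congrArg Fin.val h0
  simp only [Fin.val_one', Fin.val_zero] at h1
  have h2 := Nat.mod_eq_of_lt hp
  exact absurd (h2 ▸ h1) one_ne_zero

/- the model `sB e c` of a generic element of `⟨b_1, …, b_r⟩` -/

variable {r : ℕ}

/-- `∑ i, c i * e i n`. -/
def sVal (e : Fin r → Fin (p - 1) → ZMod p) (c : Fin r → ZMod p) (n : Fin (p - 1)) :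
    ZMod p := ∑ i, c i * e i n

/-- The element of `⟨b_1, …, b_r⟩` with exponent vector `c`. -/
def sB (e : Fin r → Fin (p - 1) → ZMod p) (c : Fin r → ZMod p) : TreeAut p :=
  ⟨fun v => match tailIdx v with
    | none => 1
    | some n => Equiv.addRight (((sVal e c n).val : ℕ) : Fin p)⟩

variable {e : Fin r → Fin (p - 1) → ZMod p}

lemma sB_perm_none {c : Fin r → ZMod p} {v : List (Fin p)} (h : tailIdx v = none) :
    (sB e c).perm v = 1 := by
  simp [sB, h]

lemma sB_perm_some {c : Fin r → ZMod p} {v : List (Fin p)} {n : Fin (p - 1)}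
    (h : tailIdx v = some n) :
    (sB e c).perm v = Equiv.addRight (((sVal e c n).val : ℕ) : Fin p) := by
  simp [sB, h]

lemma sB_perm_nil (c : Fin r → ZMod p) : (sB e c).perm [] = 1 := rfl

lemma sB_perm_congr (c : Fin r → ZMod p) {v v' : List (Fin p)}
    (h : tailIdx v = tailIdx v') : (sB e c).perm v = (sB e c).perm v' := by
  cases h' : tailIdx v' with
  | none => rw [sB_perm_none (h.trans h'), sB_perm_none h']
  | some n => rw [sB_perm_some (h.trans h'), sB_perm_some h']

lemma sB_sect_last (c : Fin r → ZMod p) :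
    (sB e c).sect (((p - 1 : ℕ)) : Fin p) = sB e c := by
  apply TreeAut.ext'
  intro v
  show (sB e c).perm ((((p - 1 : ℕ)) : Fin p) :: v) = (sB e c).perm v
  exact sB_perm_congr c (tailIdx_cons_last v)

lemma sB_sect_ne (c : Fin r → ZMod p) {x : Fin p} (hx : x.val < p - 1) :
    (sB e c).sect x = rot p ^ (sVal e c ⟨x.val, hx⟩).val := by
  apply TreeAut.ext'
  intro v
  show (sB e c).perm (x :: v) = (rot p ^ (sVal e c ⟨x.val, hx⟩).val).perm v
  rw [rot_pow_perm]
  cases v with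
  | nil =>
    rw [sB_perm_some (tailIdx_singleton_ne (by omega))]
    simp
  | cons z w =>
    rw [sB_perm_none (tailIdx_cons_cons_ne (by omega) w)]
    simp

lemma sB_act_tailIdx (c : Fin r → ZMod p) :
    ∀ v : List (Fin p), tailIdx ((sB e c).act v) = tailIdx v := by
  intro v
  induction v with
  | nil => rfl
  | cons x w ih =>
    show tailIdx ((sB e c).perm [] x :: ((sB e c).sect x).act w) = tailIdx (x :: w)
    rw [sB_perm_nil]
    simp only [Equiv.Perm.coe_one, id_eq]
    by_cases hx : x.val = p - 1
    · rw [eq_lastP hx, sB_sect_last, tailIdx_cons_last, tailIdx_cons_last, ih]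
    · have hlt : x.val < p - 1 := by have := x.isLt; omega
      rw [sB_sect_ne c hlt]
      cases w with
      | nil => rfl
      | cons z u =>
        rw [rot_pow_act_cons, tailIdx_cons_cons_ne hx, tailIdx_cons_cons_ne hx]

lemma natCast_mod_fin (a : ℕ) : ((a % p : ℕ) : Fin p) = (a : Fin p) := by
  apply Fin.ext
  simp [Fin.val_natCast]

lemma sB_mul (c c' : Fin r → ZMod p) : sB e c * sB e c' = sB e (c + c') := by
  ext v y
  rw [perm_mul]
  have h2 : (sB e c').perm ((sB e c).act v) = (sB e c').perm v :=
    sB_perm_congr c' (sB_act_tailIdx c v)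
  rw [h2]
  cases h : tailIdx v with
  | none =>
    rw [sB_perm_none h, sB_perm_none h, sB_perm_none h]
    rfl
  | some n =>
    rw [sB_perm_some h, sB_perm_some h, sB_perm_some h]
    have hval : sVal e (c + c') n = sVal e c n + sVal e c' n := by
      simp [sVal, add_mul, Finset.sum_add_distrib]
    simp only [Equiv.trans_apply, Equiv.coe_addRight, hval, ZMod.val_add,
      natCast_mod_fin, Nat.cast_add, add_assoc]

lemma sB_zero : sB e (0 : Fin r → ZMod p) = 1 := by
  ext v y
  cases h : tailIdx v with
  | none => rw [sB_perm_none h, perm_one]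
  | some n =>
    rw [sB_perm_some h, perm_one]
    have : sVal e (0 : Fin r → ZMod p) n = 0 := by simp [sVal]
    simp [this]

lemma sB_pow (c : Fin r → ZMod p) (m : ℕ) : sB e c ^ m = sB e (m • c) := by
  induction m with
  | zero => simp [sB_zero]
  | succ m ih =>
    rw [pow_succ, ih, sB_mul, succ_nsmul]

lemma sB_sectV_replicate (c : Fin r → ZMod p) (m : ℕ) :
    (sB e c).sectV (List.replicate m (((p - 1 : ℕ)) : Fin p)) = sB e c := by
  induction m with
  | zero => rfl
  | succ m ih =>
    show ((sB e c).sect _).sectV (List.replicate m _) = _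
    rw [sB_sect_last, ih]

lemma sectV_append (g : TreeAut p) (u w : List (Fin p)) :
    g.sectV (u ++ w) = (g.sectV u).sectV w := by
  induction u generalizing g with
  | nil => rfl
  | cons x v ih => exact ih (g.sect x)

lemma one_sectV (v : List (Fin p)) : (1 : TreeAut p).sectV v = 1 := by
  induction v with
  | nil => rfl
  | cons x w ih =>
    show ((1 : TreeAut p).sect x).sectV w = 1
    rw [sect_one, ih]

end SpinalAux

open TreeAut
open Fin.NatCast

/-- **Contracting property and nucleus of multi-edge spinal groups.**
For a prime `p ≥ 3` and `1 ≤ r < p`, the multi-edge spinal group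
`G_{E^(p)} = ⟨a, b_1, …, b_r⟩` defined by an `r`-tuple of linearly independent
vectors of `(ℤ/pℤ)^{p-1}` is contracting with nucleus
`N = ⟨a⟩ ∪ ⟨b_1, …, b_r⟩`, and `|N| = p^r + p - 1`. -/
theorem spinal_contracting_nucleus (p : ℕ) [Fact p.Prime] [NeZero p] (hp3 : 3 ≤ p)
    (r : ℕ) (hr1 : 1 ≤ r) (hrp : r < p)
    (e : Fin r → Fin (p - 1) → ZMod p)
    (b : Fin r → TreeAut p)
    (hdatum : IsSpinalDatum p e b) :
    IsNucleusOf p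
      ((Subgroup.zpowers (rot p) : Set (TreeAut p)) ∪
        (Subgroup.closure (Set.range b) : Set (TreeAut p)))
      (spinalGroup p b)
      ((Subgroup.zpowers (rot p) : Set (TreeAut p)) ∪
        (Subgroup.closure (Set.range b) : Set (TreeAut p))) ∧
    ((Subgroup.zpowers (rot p) : Set (TreeAut p)) ∪
        (Subgroup.closure (Set.range b) : Set (TreeAut p))).ncard = p ^ r + p - 1 := by
  classical
  obtain ⟨hLI, hb⟩ := hdatum
  have hp2 : 2 ≤ p := by omega
  have hppos : 0 < p := by omega
  -- the generators agree with the model `sB`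
  have hb_eq : ∀ i, b i = sB e (Pi.single i 1) := by
    intro i
    obtain ⟨hfix, hsectL, hsectNe⟩ := hb i
    have hperm0 : (b i).perm [] = 1 := by
      apply Equiv.ext
      intro x
      have hx := hfix x
      have hx2 : (b i).act [x] = [(b i).perm [] x] := rfl
      rw [hx2] at hx
      simpa using hx
    apply TreeAut.ext'
    intro v
    induction v with
    | nil => rw [hperm0, sB_perm_nil]
    | cons x w ih =>
      show ((b i).sect x).perm w = (sB e (Pi.single i 1)).perm (x :: w)
      by_cases hx : x.val = p - 1
      · rw [eq_lastP hx, hsectL, ih]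
        exact (sB_perm_congr _ (by rw [← eq_lastP hx, eq_lastP hx, tailIdx_cons_last])).symm
      · have hlt : x.val < p - 1 := by have := x.isLt; omega
        have hxn : (((⟨x.val, hlt⟩ : Fin (p - 1)).val : ℕ) : Fin p) = x :=
          Fin.cast_val_eq_self x
        have hs := hsectNe ⟨x.val, hlt⟩
        rw [hxn] at hs
        rw [hs]
        have hrfl : (sB e (Pi.single i 1)).perm (x :: w)
            = ((sB e (Pi.single i 1)).sect x).perm w := rfl
        rw [hrfl, sB_sect_ne _ hlt]
        have hsv : sVal e (Pi.single i 1) ⟨x.val, hlt⟩ = e i ⟨x.val, hlt⟩ := by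
          simp [sVal, Pi.single_apply, ite_mul, zero_mul]
        rw [hsv]
  -- the set of words in the `b i`
  have hBset : ((Subgroup.closure (Set.range b) : Subgroup (TreeAut p)) : Set (TreeAut p))
      = Set.range (sB e) := by
    have hmul : ∀ g h : TreeAut p, g ∈ Set.range (sB e) → h ∈ Set.range (sB e) →
        g * h ∈ Set.range (sB e) := by
      rintro _ _ ⟨c, rfl⟩ ⟨d, rfl⟩; exact ⟨c + d, (sB_mul c d).symm⟩
    let HB : Subgroup (TreeAut p) :=
      { carrier := Set.range (sB e)
        one_mem' := ⟨0, sB_zero⟩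
        mul_mem' := fun {g h} hg hh => hmul g h hg hh
        inv_mem' := by
          rintro g ⟨c, rfl⟩
          refine ⟨-c, ?_⟩
          have h1 : sB e (-c) * sB e c = 1 := by
            rw [sB_mul, neg_add_cancel, sB_zero]
          exact eq_inv_of_mul_eq_one_left h1 }
    apply Set.Subset.antisymm
    · intro g hg
      have hle : Subgroup.closure (Set.range b) ≤ HB := by
        rw [Subgroup.closure_le]
        rintro _ ⟨i, rfl⟩
        exact ⟨Pi.single i 1, (hb_eq i).symm⟩
      exact hle hg
    · rintro g ⟨c, rfl⟩
      have key : ∀ s : Finset (Fin r), ∀ c : Fin r → ZMod p,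
          (∀ i, i ∉ s → c i = 0) → sB e c ∈ Subgroup.closure (Set.range b) := by
        intro s
        induction s using Finset.cons_induction with
        | empty =>
          intro c hc
          have hc0 : c = 0 := funext fun i => hc i (by simp)
          rw [hc0, sB_zero]
          exact one_mem _
        | cons a s ha ih =>
          intro c hc
          have hsplit : Pi.single a (c a) + Function.update c a 0 = c := by
            funext j
            by_cases hj : j = a
            · subst hj; simp
            · simp [Pi.single_eq_of_ne hj, Function.update_of_ne hj]
          have h1 : sB e (Pi.single a (c a)) ∈ Subgroup.closure (Set.range b) := by
            have heq : sB e (Pi.single a (c a)) = (b a) ^ (c a).val := by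
              rw [hb_eq a, sB_pow]
              congr 1
              funext j
              by_cases hj : j = a
              · subst hj
                simp only [Pi.single_eq_same, Pi.smul_apply, smul_eq_mul, nsmul_eq_mul,
                  mul_one]
                rw [ZMod.natCast_val, ZMod.cast_id]
              · simp [Pi.single_eq_of_ne hj]
            rw [heq]
            exact pow_mem (Subgroup.subset_closure (Set.mem_range_self a)) _
          have h2 : sB e (Function.update c a 0) ∈ Subgroup.closure (Set.range b) := by
            refine ih _ ?_
            intro i hi
            by_cases hia : i = a
            · subst hia; simp
            · rw [Function.update_of_ne hia]
              exact hc i (by simp [Finset.mem_cons, hia, hi])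
          rw [← hsplit, ← sB_mul]
          exact mul_mem h1 h2
      exact key Finset.univ c (by simp)
  -- injectivity of `sB`
  have hval_inj : Function.Injective (sB e) := by
    intro c c' hcc
    have hsv : ∀ n : Fin (p - 1), sVal e c n = sVal e c' n := by
      intro n
      have hnp : n.val < p - 1 := n.isLt
      have hxv : (((n.val : ℕ) : Fin p)).val = n.val := by
        rw [Fin.val_natCast]; exact Nat.mod_eq_of_lt (by omega)
      have ht : tailIdx [((n.val : ℕ) : Fin p)] = some n := by
        rw [tailIdx_singleton_ne (by omega)]
        congr 1
        exact Fin.ext hxv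
      have h1 := congrArg (fun g : TreeAut p => g.perm [((n.val : ℕ) : Fin p)]) hcc
      rw [sB_perm_some ht, sB_perm_some ht] at h1
      have h2 := congrArg (fun q : Equiv.Perm (Fin p) => q 0) h1
      simp only [Equiv.coe_addRight, zero_add] at h2
      have h3 := congrArg Fin.val h2
      rw [Fin.val_natCast, Fin.val_natCast,
        Nat.mod_eq_of_lt (ZMod.val_lt _), Nat.mod_eq_of_lt (ZMod.val_lt _)] at h3
      exact ZMod.val_injective p h3
    have hdiff : ∀ i, c i - c' i = 0 := by
      have hsum : ∑ i, (fun i => c i - c' i) i • e i = 0 := by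
        funext n
        simp only [Finset.sum_apply, Pi.smul_apply, smul_eq_mul, sub_mul, Pi.zero_apply]
        rw [Finset.sum_sub_distrib, sub_eq_zero]
        exact hsv n
      exact fun i => Fintype.linearIndependent_iff.mp hLI _ hsum i
    funext i
    exact sub_eq_zero.mp (hdiff i)
  -- order of the rooted automorphism
  have horder : orderOf (rot p) = p := orderOf_eq_prime rot_pow_p (rot_ne_one hp2)
  have hmemA : ∀ g ∈ Subgroup.zpowers (rot p), ∃ m : ℕ, m < p ∧ g = rot p ^ m := by
    intro g hg
    obtain ⟨k, hk⟩ := Subgroup.mem_zpowers_iff.mp hg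
    have hpne : ((p : ℤ)) ≠ 0 := by exact_mod_cast hppos.ne'
    have h0k : 0 ≤ k % (p : ℤ) := Int.emod_nonneg k hpne
    have hkp : k % (p : ℤ) < (p : ℤ) := Int.emod_lt_of_pos k (by exact_mod_cast hppos)
    refine ⟨(k % (p : ℤ)).toNat, by omega, ?_⟩
    have hcalc : rot p ^ k = rot p ^ (k % (p : ℤ)).toNat := by
      calc rot p ^ k = rot p ^ (k % ((orderOf (rot p) : ℕ) : ℤ)) := (zpow_mod_orderOf _ _).symm
        _ = rot p ^ (k % (p : ℤ)) := by rw [horder]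
        _ = rot p ^ (((k % (p : ℤ)).toNat : ℤ)) := by rw [Int.toNat_of_nonneg h0k]
        _ = rot p ^ (k % (p : ℤ)).toNat := zpow_natCast _ _
    rw [← hk, hcalc]
  have hApow : ∀ m : ℕ, rot p ^ m ∈ Subgroup.zpowers (rot p) := fun m =>
    Subgroup.mem_zpowers_iff.mpr ⟨(m : ℤ), zpow_natCast _ _⟩
  have h1A : (1 : TreeAut p) ∈ (Subgroup.zpowers (rot p) : Set (TreeAut p)) :=
    SetLike.mem_coe.mpr (one_mem _)
  -- sections of nucleus elements
  have hsectN : ∀ g ∈ ((Subgroup.zpowers (rot p) : Set (TreeAut p)) ∪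
      (Subgroup.closure (Set.range b) : Set (TreeAut p))), ∀ x : Fin p,
      g.sect x ∈ ((Subgroup.zpowers (rot p) : Set (TreeAut p)) ∪
      (Subgroup.closure (Set.range b) : Set (TreeAut p))) := by
    rintro g (hA | hB) x
    · obtain ⟨m, _, rfl⟩ := hmemA g hA
      rw [rot_pow_sect]
      exact Or.inl h1A
    · rw [hBset] at hB
      obtain ⟨c, rfl⟩ := hB
      by_cases hx : x.val = p - 1
      · rw [eq_lastP hx, sB_sect_last]
        right; rw [hBset]; exact ⟨c, rfl⟩
      · have hlt : x.val < p - 1 := by have := x.isLt; omega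
        rw [sB_sect_ne _ hlt]
        exact Or.inl (SetLike.mem_coe.mpr (hApow _))
  -- the intersection is trivial
  have hinter : ((Subgroup.zpowers (rot p) : Set (TreeAut p)) ∩
      (Subgroup.closure (Set.range b) : Set (TreeAut p))) = {1} := by
    apply Set.Subset.antisymm
    · rintro g ⟨hA, hB⟩
      obtain ⟨m, hm, rfl⟩ := hmemA g hA
      rw [hBset] at hB
      obtain ⟨c, hc⟩ := hB
      have h0 := congrArg (fun g : TreeAut p => g.perm []) hc
      rw [sB_perm_nil, rot_pow_perm] at h0
      have h0' : (1 : Equiv.Perm (Fin p)) = Equiv.addRight ((m : Fin p)) := by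
        simpa using h0
      have h2 := congrArg (fun q : Equiv.Perm (Fin p) => q 0) h0'
      simp only [Equiv.coe_addRight, Equiv.Perm.coe_one, id_eq, zero_add] at h2
      have h3 := congrArg Fin.val h2.symm
      simp only [Fin.val_natCast, Fin.val_zero] at h3
      rw [Nat.mod_eq_of_lt hm] at h3
      simp [h3]
    · intro g hg
      rw [Set.mem_singleton_iff] at hg
      subst hg
      exact ⟨h1A, SetLike.mem_coe.mpr (one_mem _)⟩
  -- finiteness
  have hfinA : (Subgroup.zpowers (rot p) : Set (TreeAut p)).Finite := by
    apply Set.Finite.subset (Set.finite_range (fun m : Fin p => rot p ^ m.val))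
    intro g hg
    obtain ⟨m, hm, rfl⟩ := hmemA g hg
    exact ⟨⟨m, hm⟩, rfl⟩
  have hfinB : (Subgroup.closure (Set.range b) : Set (TreeAut p)).Finite := by
    rw [hBset]; exact Set.finite_range _
  refine ⟨⟨⟨?_, ?_, 1, le_refl 1, ?_⟩, ?_⟩, ?_⟩
  · -- N ⊆ G
    rintro g (hA | hB)
    · obtain ⟨m, _, rfl⟩ := hmemA g hA
      exact pow_mem (rot_mem_spinal p b) m
    · exact Subgroup.closure_mono (Set.subset_insert _ _) hB
  · exact hfinA.union hfinB
  · -- quasinucleus with k = 1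
    intro n1 hn1 n2 hn2 v hv
    rw [Set.union_self] at hn1 hn2
    obtain ⟨x, rfl⟩ := List.length_eq_one_iff.mp hv
    have hrfl : (n1 * n2).sectV [x] = (n1 * n2).sect x := rfl
    rw [hrfl, sect_mul]
    rcases hn1 with hA | hB
    · obtain ⟨m, _, rfl⟩ := hmemA n1 hA
      rw [rot_pow_sect, one_mul]
      exact hsectN n2 hn2 _
    · rw [hBset] at hB
      obtain ⟨c, rfl⟩ := hB
      rw [sB_perm_nil]
      simp only [Equiv.Perm.coe_one, id_eq]
      by_cases hx : x.val = p - 1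
      · rw [eq_lastP hx, sB_sect_last]
        rcases hn2 with hA2 | hB2
        · obtain ⟨m, _, rfl⟩ := hmemA n2 hA2
          rw [rot_pow_sect, mul_one]
          right; rw [hBset]; exact ⟨c, rfl⟩
        · rw [hBset] at hB2
          obtain ⟨c', rfl⟩ := hB2
          rw [sB_sect_last, sB_mul]
          right; rw [hBset]; exact ⟨c + c', rfl⟩
      · have hlt : x.val < p - 1 := by have := x.isLt; omega
        rw [sB_sect_ne _ hlt]
        rcases hn2 with hA2 | hB2
        · obtain ⟨m, _, rfl⟩ := hmemA n2 hA2
          rw [rot_pow_sect, mul_one]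
          exact Or.inl (SetLike.mem_coe.mpr (hApow _))
        · rw [hBset] at hB2
          obtain ⟨c', rfl⟩ := hB2
          rw [sB_sect_ne _ hlt, ← pow_add]
          exact Or.inl (SetLike.mem_coe.mpr (hApow _))
  · -- minimality
    rintro N' hN'G hN'fin ⟨k, hk, hq⟩
    have h1S : (1 : TreeAut p) ∈ ((Subgroup.zpowers (rot p) : Set (TreeAut p)) ∪
        (Subgroup.closure (Set.range b) : Set (TreeAut p))) ∪ N' := Or.inl (Or.inl h1A)
    rintro g (hA | hB)
    · obtain ⟨m, hm, rfl⟩ := hmemA g hA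
      obtain ⟨i0, n0, hne⟩ : ∃ i n, e i n ≠ 0 := by
        have hne := hLI.ne_zero ⟨0, hr1⟩
        obtain ⟨n, hn⟩ := Function.ne_iff.mp hne
        exact ⟨⟨0, hr1⟩, n, hn⟩
      have hsv : sVal e (Pi.single i0 ((m : ZMod p) * (e i0 n0)⁻¹)) n0 = (m : ZMod p) := by
        simp only [sVal, Pi.single_apply, ite_mul, zero_mul]
        rw [Finset.sum_ite_eq' Finset.univ i0 (fun j => ((m : ZMod p) * (e i0 n0)⁻¹) * e j n0)]
        simp only [Finset.mem_univ, if_pos]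
        rw [mul_assoc, inv_mul_cancel₀ hne, mul_one]
      have hxv : (((n0.val : ℕ) : Fin p)).val = n0.val := by
        rw [Fin.val_natCast]
        exact Nat.mod_eq_of_lt (by have := n0.isLt; omega)
      have hlt : (((n0.val : ℕ) : Fin p)).val < p - 1 := by rw [hxv]; exact n0.isLt
      have hsect : (sB e (Pi.single i0 ((m : ZMod p) * (e i0 n0)⁻¹))).sect
          ((n0.val : ℕ) : Fin p) = rot p ^ m := by
        rw [sB_sect_ne _ hlt]
        have hn0 : (⟨(((n0.val : ℕ) : Fin p)).val, hlt⟩ : Fin (p - 1)) = n0 := Fin.ext hxv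
        rw [hn0, hsv, ZMod.val_natCast, Nat.mod_eq_of_lt hm]
      have hvlen : (List.replicate (k - 1) (((p - 1 : ℕ)) : Fin p)
          ++ [((n0.val : ℕ) : Fin p)]).length = k := by
        simp; omega
      have hmem1 : sB e (Pi.single i0 ((m : ZMod p) * (e i0 n0)⁻¹)) ∈
          ((Subgroup.zpowers (rot p) : Set (TreeAut p)) ∪
          (Subgroup.closure (Set.range b) : Set (TreeAut p))) ∪ N' := by
        left; right; rw [hBset]; exact ⟨_, rfl⟩
      have hsec := hq _ hmem1 1 h1S _ hvlen
      rw [mul_one, sectV_append, sB_sectV_replicate] at hsec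
      have hrfl : ∀ g : TreeAut p, g.sectV [((n0.val : ℕ) : Fin p)]
          = g.sect ((n0.val : ℕ) : Fin p) := fun g => rfl
      rwa [hrfl, hsect] at hsec
    · rw [hBset] at hB
      obtain ⟨c, rfl⟩ := hB
      have hmem1 : sB e c ∈ ((Subgroup.zpowers (rot p) : Set (TreeAut p)) ∪
          (Subgroup.closure (Set.range b) : Set (TreeAut p))) ∪ N' := by
        left; right; rw [hBset]; exact ⟨c, rfl⟩
      have hsec := hq _ hmem1 1 h1S (List.replicate k (((p - 1 : ℕ)) : Fin p)) (by simp)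
      rwa [mul_one, sB_sectV_replicate] at hsec
  · -- cardinality
    have hcardA : (Subgroup.zpowers (rot p) : Set (TreeAut p)).ncard = p := by
      rw [← Nat.card_coe_set_eq]
      rw [show Nat.card ((Subgroup.zpowers (rot p) : Set (TreeAut p)) : Type _)
        = Nat.card (Subgroup.zpowers (rot p)) from rfl]
      rw [Nat.card_zpowers, horder]
    have hcardB : (Subgroup.closure (Set.range b) : Set (TreeAut p)).ncard = p ^ r := by
      rw [hBset, ← Nat.card_coe_set_eq, Nat.card_range_of_injective hval_inj]
      rw [Nat.card_eq_fintype_card, Fintype.card_fun, ZMod.card, Fintype.card_fin]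
    have hcard := Set.ncard_union_add_ncard_inter
      (Subgroup.zpowers (rot p) : Set (TreeAut p))
      (Subgroup.closure (Set.range b) : Set (TreeAut p)) hfinA hfinB
    rw [hinter, hcardA, hcardB, Set.ncard_singleton] at hcard
    have hpow : 0 < p ^ r := pow_pos hppos r
    omega
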